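/- For the two-loops quiver over ℂ and every n ≥ 2, the subspace Im D_{n−1} ⊆ ℂ(Q_n||Q_1) is invariant under the endomorphism u ↦ [H,u]_Q; the eigenvalues of this endomorphism restricted to Im D_{n−1} are exactly the integers n−1−2l for l = 0, 1, …, n−1, and for each such l the corresponding eigenspace of the restriction has dimension C(n−1,l). -/

import Mathlib

/-! Two-loops quiver base: one vertex `e`, two loops `a`, `b`.

`Q_n` is the set of words of length `n` in `{a, b}` (all paths are parallel, since
there is a single vertex), and `ℂ(Q_n ∥ Q_1)` is the complex vector space with basis
`Q_n ∥ Q_1 = Q_n × Q_1`. -/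

namespace TwoLoops

/-- The two arrows (loops) of the quiver. -/
inductive TL : Type
  | a : TL
  | b : TL
deriving DecidableEq

instance : Fintype TL := ⟨{TL.a, TL.b}, fun x => by cases x <;> simp⟩

/-- Paths of length `n` in the two-loops quiver: words of length `n` in `{a, b}`. -/
abbrev Wd (n : ℕ) : Type := Fin n → TL

/-- `ℂ(Q_n ∥ Q_1)`: the complex vector space with basis `Q_n ∥ Q_1 = Q_n × Q_1`. -/
abbrev CQ1 (n : ℕ) : Type := (Wd n × TL) → ℂ

/-- `ℂ(Q_n ∥ Q_0)`: basis `Q_n ∥ Q_0 = Q_n` (the unique vertex `e` is omitted). -/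
abbrev CQ0 (n : ℕ) : Type := Wd n → ℂ

/-- The basis element `(γ, x)` of `ℂ(Q_n ∥ Q_1)`. -/
noncomputable def bE {n : ℕ} (γ : Wd n) (x : TL) : CQ1 n := Pi.single (γ, x) (1 : ℂ)

/-- The Gerstenhaber-type bracket `[·,·]_Q` on basis elements, for a degree-one
element `(c,x) ∈ Q_1 ∥ Q_1` against `(γ,y) ∈ Q_n ∥ Q_1`:
`[(c,x),(γ,y)]_Q = δ_{c,y}·(γ,x) − Σ_{i=1}^n δ_{γ_i,x}·(γ ⋄_i c, y)`,
which is the general formula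
`Σ_i (−1)^{(i−1)(m−1)} (α,x)∘_i(β,y) − (−1)^{(n−1)(m−1)} Σ_i (−1)^{(i−1)(n−1)} (β,y)∘_i(α,x)`
specialized to the case where the left argument has degree one (all signs are `+1`;
here `γ ⋄_i c` is the path obtained from `γ` by replacing its `i`-th arrow by `c`). -/
noncomputable def brB {n : ℕ} (P : Wd 1 × TL) (R : Wd n × TL) : CQ1 n :=
  (if P.1 0 = R.2 then bE R.1 P.2 else 0)
    - ∑ i : Fin n,
        (if R.1 i = P.2 then bE (Function.update R.1 i (P.1 0)) R.2 else 0)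

/-- The bracket `[f, ·]_Q` with a degree-one element `f ∈ ℂ(Q_1 ∥ Q_1)`, as a linear
endomorphism of `ℂ(Q_n ∥ Q_1)` (bilinear extension of `brB`). -/
noncomputable def brL {n : ℕ} (f : CQ1 1) : CQ1 n →ₗ[ℂ] CQ1 n :=
  ∑ P : Wd 1 × TL, ∑ R : Wd n × TL,
    f P • ((LinearMap.proj R : CQ1 n →ₗ[ℂ] ℂ).smulRight (brB P R))

/-- `H = (b,b) − (a,a)`. -/
noncomputable def H : CQ1 1 := bE (fun _ => TL.b) TL.b - bE (fun _ => TL.a) TL.a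

/-- `E = (a,b)`. -/
noncomputable def E : CQ1 1 := bE (fun _ => TL.a) TL.b

/-- `F = (b,a)`. -/
noncomputable def F : CQ1 1 := bE (fun _ => TL.b) TL.a

/-- `I = (a,a) + (b,b)`. -/
noncomputable def Iel : CQ1 1 := bE (fun _ => TL.a) TL.a + bE (fun _ => TL.b) TL.b

/-- `D_n` on basis elements: `D_n(γ,e) = (aγ,a) + (bγ,b) + (−1)^{n+1}((γa,a) + (γb,b))`. -/
noncomputable def DB (n : ℕ) (γ : Wd n) : CQ1 (n + 1) :=
  bE (Fin.cons TL.a γ) TL.a + bE (Fin.cons TL.b γ) TL.b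
    + ((-1 : ℂ) ^ (n + 1)) • (bE (Fin.snoc γ TL.a) TL.a + bE (Fin.snoc γ TL.b) TL.b)

/-- The linear map `D_n : ℂ(Q_n ∥ Q_0) → ℂ(Q_{n+1} ∥ Q_1)`. -/
noncomputable def Dmap (n : ℕ) : CQ0 n →ₗ[ℂ] CQ1 (n + 1) :=
  ∑ γ : Wd n, (LinearMap.proj γ : CQ0 n →ₗ[ℂ] ℂ).smulRight (DB n γ)

/-- `a(γ)`: the number of occurrences of the arrow `a` in the path `γ`. -/
def ca {n : ℕ} (γ : Wd n) : ℕ := (Finset.univ.filter fun i => γ i = TL.a).card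

/-- `b(γ)`: the number of occurrences of the arrow `b` in the path `γ`. -/
def cb {n : ℕ} (γ : Wd n) : ℕ := (Finset.univ.filter fun i => γ i = TL.b).card

/-- `v(γ) = a(γ) − b(γ)`. -/
def vv {n : ℕ} (γ : Wd n) : ℤ := (ca γ : ℤ) - (cb γ : ℤ)


/-- The endomorphism `u ↦ [H,u]_Q` of `ℂ(Q_{m+1} ∥ Q_1)` restricted to `Im D_m`. -/
noncomputable def HonImD (m : ℕ)
    (hInv : ∀ u ∈ LinearMap.range (Dmap m),
      (brL H : CQ1 (m + 1) →ₗ[ℂ] CQ1 (m + 1)) u ∈ LinearMap.range (Dmap m)) :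
    Module.End ℂ (LinearMap.range (Dmap m)) :=
  (brL H : CQ1 (m + 1) →ₗ[ℂ] CQ1 (m + 1)).restrict hInv

/-! ### Auxiliary development -/

open Module

noncomputable section Aux

lemma ca_spec {n : ℕ} (γ : Wd n) : ca γ = ∑ i, if γ i = TL.a then 1 else 0 :=
  Finset.card_filter _ _

lemma cb_spec {n : ℕ} (γ : Wd n) : cb γ = ∑ i, if γ i = TL.b then 1 else 0 :=
  Finset.card_filter _ _

lemma ca_add_cb {n : ℕ} (γ : Wd n) : ca γ + cb γ = n := by
  rw [ca_spec, cb_spec, ← Finset.sum_add_distrib]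
  have h : ∀ i : Fin n, ((if γ i = TL.a then 1 else 0) + (if γ i = TL.b then 1 else 0)) = 1 := by
    intro i; cases h : γ i <;> simp [h]
  simp [h]

lemma cb_le {n : ℕ} (γ : Wd n) : cb γ ≤ n := by
  have := ca_add_cb γ; omega

lemma cb_cons {n : ℕ} (x : TL) (γ : Wd n) :
    cb (Fin.cons x γ : Wd (n+1)) = (if x = TL.b then 1 else 0) + cb γ := by
  rw [cb_spec, cb_spec, Fin.sum_univ_succ]
  simp [Fin.cons_succ, Fin.cons_zero]

lemma ca_cons {n : ℕ} (x : TL) (γ : Wd n) :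
    ca (Fin.cons x γ : Wd (n+1)) = (if x = TL.a then 1 else 0) + ca γ := by
  rw [ca_spec, ca_spec, Fin.sum_univ_succ]
  simp [Fin.cons_succ, Fin.cons_zero]

lemma cb_snoc {n : ℕ} (x : TL) (γ : Wd n) :
    cb (Fin.snoc γ x : Wd (n+1)) = cb γ + (if x = TL.b then 1 else 0) := by
  rw [cb_spec, cb_spec, Fin.sum_univ_castSucc]
  simp [Fin.snoc_castSucc, Fin.snoc_last]

lemma ca_snoc {n : ℕ} (x : TL) (γ : Wd n) :
    ca (Fin.snoc γ x : Wd (n+1)) = ca γ + (if x = TL.a then 1 else 0) := by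
  rw [ca_spec, ca_spec, Fin.sum_univ_castSucc]
  simp [Fin.snoc_castSucc, Fin.snoc_last]

/-- `eps a = -1`, `eps b = 1`. -/
def eps : TL → ℂ
  | TL.a => -1
  | TL.b => 1

lemma brB_H {n : ℕ} (δ : Wd n) (x : TL) :
    brB ((fun _ => TL.b : Wd 1), TL.b) (δ, x) - brB ((fun _ => TL.a : Wd 1), TL.a) (δ, x)
      = (eps x + (ca δ : ℂ) - (cb δ : ℂ)) • bE δ x := by
  have hb : ∀ i : Fin n,
      (if δ i = TL.b then bE (Function.update δ i TL.b) x else 0) =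
      (if δ i = TL.b then bE δ x else 0) := by
    intro i
    by_cases h : δ i = TL.b
    · rw [if_pos h, if_pos h, ← h, Function.update_eq_self]
    · rw [if_neg h, if_neg h]
  have ha : ∀ i : Fin n,
      (if δ i = TL.a then bE (Function.update δ i TL.a) x else 0) =
      (if δ i = TL.a then bE δ x else 0) := by
    intro i
    by_cases h : δ i = TL.a
    · rw [if_pos h, if_pos h, ← h, Function.update_eq_self]
    · rw [if_neg h, if_neg h]
  have sb : (∑ i : Fin n, if δ i = TL.b then bE δ x else 0) = (cb δ) • bE δ x := by
    rw [← Finset.sum_filter, Finset.sum_const, cb]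
  have sa : (∑ i : Fin n, if δ i = TL.a then bE δ x else 0) = (ca δ) • bE δ x := by
    rw [← Finset.sum_filter, Finset.sum_const, ca]
  unfold brB
  simp only [Finset.sum_congr rfl (fun i _ => hb i), Finset.sum_congr rfl (fun i _ => ha i),
    sb, sa]
  rw [← Nat.cast_smul_eq_nsmul ℂ (cb δ), ← Nat.cast_smul_eq_nsmul ℂ (ca δ)]
  cases x <;> simp only [eps, reduceCtorEq, if_neg, if_pos, ite_true, ite_false] <;> module

lemma brL_bE {n : ℕ} (δ : Wd n) (x : TL) :
    brL H (bE δ x) = (eps x + (ca δ : ℂ) - (cb δ : ℂ)) • bE δ x := by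
  rw [brL]
  simp only [LinearMap.sum_apply, LinearMap.smul_apply, LinearMap.smulRight_apply,
    LinearMap.proj_apply]
  have h1 : ∀ P : Wd 1 × TL,
      (∑ R : Wd n × TL, H P • bE δ x R • brB P R) = H P • brB P (δ, x) := by
    intro P
    rw [Fintype.sum_eq_single (δ, x)]
    · simp [bE]
    · intro R hR
      rw [show bE δ x R = 0 from Pi.single_eq_of_ne hR 1]
      simp
  rw [Finset.sum_congr rfl (fun P _ => h1 P)]
  have hH : ∀ P : Wd 1 × TL, H P • brB P (δ, x) =
      ((Pi.single ((fun _ => TL.b : Wd 1), TL.b) (1:ℂ) : CQ1 1) P) • brB P (δ, x)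
        - ((Pi.single ((fun _ => TL.a : Wd 1), TL.a) (1:ℂ) : CQ1 1) P) • brB P (δ, x) := by
    intro P
    rw [← sub_smul]; rfl
  rw [Finset.sum_congr rfl (fun P _ => hH P), Finset.sum_sub_distrib]
  rw [Fintype.sum_eq_single (((fun _ => TL.b : Wd 1), TL.b) : Wd 1 × TL)
      (fun R hR => by rw [Pi.single_eq_of_ne hR]; simp),
    Fintype.sum_eq_single (((fun _ => TL.a : Wd 1), TL.a) : Wd 1 × TL)
      (fun R hR => by rw [Pi.single_eq_of_ne hR]; simp)]
  simp only [Pi.single_eq_same, one_smul]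
  exact brB_H δ x

lemma brL_DB (m : ℕ) (γ : Wd m) :
    brL H (DB m γ) = ((m : ℂ) - 2 * (cb γ : ℂ)) • DB m γ := by
  have hcast : (ca γ : ℂ) + (cb γ : ℂ) = (m : ℂ) := by
    exact_mod_cast congrArg (Nat.cast : ℕ → ℂ) (ca_add_cb γ)
  have key : ∀ (δ : Wd (m+1)) (x : TL),
      eps x + (ca δ : ℂ) - (cb δ : ℂ) = (m : ℂ) - 2 * (cb γ : ℂ) →
      brL H (bE δ x) = ((m : ℂ) - 2 * (cb γ : ℂ)) • bE δ x := by
    intro δ x h; rw [brL_bE, h]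
  simp only [DB]
  rw [map_add, map_add, map_smul, map_add]
  rw [key _ _ (by rw [ca_cons, cb_cons]; push_cast; simp [eps]; linear_combination hcast),
    key _ _ (by rw [ca_cons, cb_cons]; push_cast; simp [eps]; linear_combination hcast),
    key _ _ (by rw [ca_snoc, cb_snoc]; push_cast; simp [eps]; linear_combination hcast),
    key _ _ (by rw [ca_snoc, cb_snoc]; push_cast; simp [eps]; linear_combination hcast)]
  module

/-- The diagonal operator on `ℂ(Q_m ∥ Q_0)` with entries `m - 2·cb γ`. -/
def gmap (m : ℕ) : CQ0 m →ₗ[ℂ] CQ0 m :=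
  LinearMap.pi fun γ => ((m : ℂ) - 2 * (cb γ : ℂ)) • LinearMap.proj γ

lemma gmap_apply {m : ℕ} (c : CQ0 m) (γ : Wd m) :
    gmap m c γ = ((m : ℂ) - 2 * (cb γ : ℂ)) * c γ := rfl

lemma Dmap_apply (m : ℕ) (c : CQ0 m) : Dmap m c = ∑ γ : Wd m, c γ • DB m γ := by
  rw [Dmap]
  simp [LinearMap.sum_apply]

lemma comm (m : ℕ) (c : CQ0 m) : brL H (Dmap m c) = Dmap m (gmap m c) := by
  rw [Dmap_apply, map_sum, Dmap_apply]
  refine Finset.sum_congr rfl fun γ _ => ?_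
  rw [map_smul, brL_DB, gmap_apply, smul_smul, mul_comm]

lemma hInv_holds (m : ℕ) : ∀ u ∈ LinearMap.range (Dmap m),
    (brL H : CQ1 (m + 1) →ₗ[ℂ] CQ1 (m + 1)) u ∈ LinearMap.range (Dmap m) := by
  rintro u ⟨c, rfl⟩
  exact ⟨gmap m c, (comm m c).symm⟩

lemma DB_eval_b {k : ℕ} (γ : Wd (k+1)) (hγ : γ (Fin.last k) = TL.a) (δ : Wd (k+1)) :
    DB (k+1) δ (Fin.cons TL.b γ, TL.b) = if δ = γ then 1 else 0 := by
  have h1 : ¬((Fin.cons TL.b γ, TL.b) = ((Fin.cons TL.a δ : Wd (k+2)), TL.a)) := by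
    intro h; exact TL.noConfusion (congrArg Prod.snd h)
  have h3 : ¬((Fin.cons TL.b γ, TL.b) = ((Fin.snoc δ TL.a : Wd (k+2)), TL.a)) := by
    intro h; exact TL.noConfusion (congrArg Prod.snd h)
  have h4 : ¬((Fin.cons TL.b γ, TL.b) = ((Fin.snoc δ TL.b : Wd (k+2)), TL.b)) := by
    intro h
    have h5 : (Fin.cons TL.b γ : Wd (k+2)) = Fin.snoc δ TL.b := congrArg Prod.fst h
    have h6 := congrFun h5 ((Fin.last k).succ)
    rw [Fin.cons_succ, hγ, Fin.succ_last, Fin.snoc_last] at h6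
    exact TL.noConfusion h6
  have h2 : ((Fin.cons TL.b γ, TL.b) = ((Fin.cons TL.b δ : Wd (k+2)), TL.b)) ↔ δ = γ := by
    constructor
    · intro h
      have h5 : (Fin.cons TL.b γ : Wd (k+2)) = Fin.cons TL.b δ := congrArg Prod.fst h
      funext i
      have h6 := congrFun h5 i.succ
      rw [Fin.cons_succ, Fin.cons_succ] at h6
      exact h6.symm
    · rintro rfl; rfl
  simp only [DB, Pi.add_apply, Pi.smul_apply, bE, smul_eq_mul, Pi.single_apply]
  rw [if_neg h1, if_neg h3, if_neg h4, if_congr h2 rfl rfl]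
  simp

lemma DB_eval_a {k : ℕ} (γ : Wd (k+1)) (hγ : γ (Fin.last k) = TL.b) (δ : Wd (k+1)) :
    DB (k+1) δ (Fin.cons TL.a γ, TL.a) = if δ = γ then 1 else 0 := by
  have h1 : ¬((Fin.cons TL.a γ, TL.a) = ((Fin.cons TL.b δ : Wd (k+2)), TL.b)) := by
    intro h; exact TL.noConfusion (congrArg Prod.snd h)
  have h3 : ¬((Fin.cons TL.a γ, TL.a) = ((Fin.snoc δ TL.b : Wd (k+2)), TL.b)) := by
    intro h; exact TL.noConfusion (congrArg Prod.snd h)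
  have h4 : ¬((Fin.cons TL.a γ, TL.a) = ((Fin.snoc δ TL.a : Wd (k+2)), TL.a)) := by
    intro h
    have h5 : (Fin.cons TL.a γ : Wd (k+2)) = Fin.snoc δ TL.a := congrArg Prod.fst h
    have h6 := congrFun h5 ((Fin.last k).succ)
    rw [Fin.cons_succ, hγ, Fin.succ_last, Fin.snoc_last] at h6
    exact TL.noConfusion h6
  have h2 : ((Fin.cons TL.a γ, TL.a) = ((Fin.cons TL.a δ : Wd (k+2)), TL.a)) ↔ δ = γ := by
    constructor
    · intro h
      have h5 : (Fin.cons TL.a γ : Wd (k+2)) = Fin.cons TL.a δ := congrArg Prod.fst h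
      funext i
      have h6 := congrFun h5 i.succ
      rw [Fin.cons_succ, Fin.cons_succ] at h6
      exact h6.symm
    · rintro rfl; rfl
  simp only [DB, Pi.add_apply, Pi.smul_apply, bE, smul_eq_mul, Pi.single_apply]
  rw [if_neg h1, if_neg h3, if_neg h4, if_congr h2 rfl rfl]
  simp

lemma Dmap_injective {k : ℕ} : Function.Injective (Dmap (k+1)) := by
  rw [← LinearMap.ker_eq_bot, LinearMap.ker_eq_bot']
  intro c hc
  have hsum : (∑ δ : Wd (k+1), c δ • DB (k+1) δ) = 0 := by
    rw [← Dmap_apply, hc]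
  funext γ
  cases hγ : γ (Fin.last k) with
  | a =>
    have h0 := congrFun hsum (Fin.cons TL.b γ, TL.b)
    rw [Finset.sum_apply] at h0
    simp only [Pi.smul_apply, smul_eq_mul] at h0
    rw [Finset.sum_congr rfl (fun δ _ => by rw [DB_eval_b γ hγ δ, mul_ite, mul_one, mul_zero]),
      Finset.sum_ite_eq' Finset.univ γ (fun δ => c δ)] at h0
    simpa using h0
  | b =>
    have h0 := congrFun hsum (Fin.cons TL.a γ, TL.a)
    rw [Finset.sum_apply] at h0
    simp only [Pi.smul_apply, smul_eq_mul] at h0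
    rw [Finset.sum_congr rfl (fun δ _ => by rw [DB_eval_a γ hγ δ, mul_ite, mul_one, mul_zero]),
      Finset.sum_ite_eq' Finset.univ γ (fun δ => c δ)] at h0
    simpa using h0

lemma eigenspace_conj {M N : Type*} [AddCommGroup M] [Module ℂ M] [AddCommGroup N] [Module ℂ N]
    (e : M ≃ₗ[ℂ] N) (g : Module.End ℂ M) (μ : ℂ) :
    Module.End.eigenspace (e.conj g) μ = (Module.End.eigenspace g μ).map (e : M →ₗ[ℂ] N) := by
  ext x
  rw [Module.End.mem_eigenspace_iff, Submodule.mem_map]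
  constructor
  · intro h
    refine ⟨e.symm x, ?_, by simp⟩
    rw [Module.End.mem_eigenspace_iff]
    apply e.injective
    rw [map_smul]
    rw [LinearEquiv.conj_apply_apply] at h
    simpa using h
  · rintro ⟨y, hy, rfl⟩
    rw [Module.End.mem_eigenspace_iff] at hy
    rw [LinearEquiv.conj_apply_apply]
    have hsy : e.symm ((e : M →ₗ[ℂ] N) y) = y := e.symm_apply_apply y
    rw [hsy, hy, map_smul]
    rfl


lemma mem_eig_gmap_iff {m : ℕ} (l : ℕ) (c : CQ0 m) :
    c ∈ Module.End.eigenspace (gmap m) ((m : ℂ) - 2 * l) ↔ ∀ γ : Wd m, cb γ ≠ l → c γ = 0 := by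
  rw [Module.End.mem_eigenspace_iff]
  constructor
  · intro h γ hne
    have h2 := congrFun h γ
    rw [gmap_apply, Pi.smul_apply, smul_eq_mul] at h2
    have hμ : ((m : ℂ) - 2 * (cb γ : ℂ)) ≠ ((m : ℂ) - 2 * (l : ℂ)) := by
      intro heq
      apply hne
      have : ((cb γ : ℂ)) = (l : ℂ) := by linear_combination -heq/2
      exact_mod_cast this
    by_contra hcγ
    exact hμ (mul_right_cancel₀ hcγ h2)
  · intro h
    funext γ
    rw [gmap_apply, Pi.smul_apply, smul_eq_mul]
    by_cases hγ : cb γ = l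
    · rw [hγ]
    · rw [h γ hγ, mul_zero, mul_zero]

/-- Words with `cb = l` correspond to subsets of size `l`. -/
def cbEquiv (m l : ℕ) : {γ : Wd m // cb γ = l} ≃ {s : Finset (Fin m) // s.card = l} where
  toFun γ := ⟨Finset.univ.filter fun i => γ.1 i = TL.b, γ.2⟩
  invFun s := ⟨fun i => if i ∈ s.1 then TL.b else TL.a, by
    rw [cb]
    convert s.2 using 2
    ext i
    by_cases hi : i ∈ s.1 <;> simp [hi]⟩
  left_inv γ := by
    apply Subtype.ext
    funext i
    cases hγ : γ.1 i <;> simp [hγ]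
  right_inv s := by
    apply Subtype.ext
    ext i
    by_cases hi : i ∈ s.1 <;> simp [hi]

lemma card_cb (m l : ℕ) : Fintype.card {γ : Wd m // cb γ = l} = Nat.choose m l := by
  rw [Fintype.card_congr (cbEquiv m l), Fintype.card_finset_len, Fintype.card_fin]

/-- The eigenspace of the diagonal operator is isomorphic to functions on the fiber. -/
def eigEquiv (m l : ℕ) :
    (Module.End.eigenspace (gmap m) ((m : ℂ) - 2 * l)) ≃ₗ[ℂ] ({γ : Wd m // cb γ = l} → ℂ) where
  toFun c s := c.1 s.1
  map_add' c d := rfl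
  map_smul' r c := rfl
  invFun d := ⟨fun γ => if h : cb γ = l then d ⟨γ, h⟩ else 0, by
    rw [mem_eig_gmap_iff]
    intro γ hγ
    rw [dif_neg hγ]⟩
  left_inv c := by
    apply Subtype.ext
    funext γ
    by_cases h : cb γ = l
    · simp [h]
    · simp [h, ((mem_eig_gmap_iff l c.1).mp c.2 γ h)]
  right_inv d := by
    funext s
    simp [s.2]

lemma finrank_eig_gmap (m l : ℕ) :
    Module.finrank ℂ (Module.End.eigenspace (gmap m) ((m : ℂ) - 2 * l)) = Nat.choose m l := by
  rw [(eigEquiv m l).finrank_eq, Module.finrank_pi, card_cb]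

lemma hasEigenvalue_gmap_iff (m : ℕ) (μ : ℂ) :
    Module.End.HasEigenvalue (gmap m) μ ↔ ∃ l : ℕ, l ≤ m ∧ μ = (m : ℂ) - 2 * l := by
  rw [Module.End.hasEigenvalue_iff]
  constructor
  · intro h
    obtain ⟨c, hc, hc0⟩ := Submodule.exists_mem_ne_zero_of_ne_bot h
    rw [Module.End.mem_eigenspace_iff] at hc
    obtain ⟨γ, hγ⟩ : ∃ γ, c γ ≠ 0 := by
      by_contra hall
      push_neg at hall
      exact hc0 (funext hall)
    have h2 := congrFun hc γ
    rw [gmap_apply, Pi.smul_apply, smul_eq_mul] at h2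
    exact ⟨cb γ, cb_le γ, (mul_right_cancel₀ hγ h2).symm⟩
  · rintro ⟨l, hl, rfl⟩
    have : Nonempty {γ : Wd m // cb γ = l} := by
      rw [← Fintype.card_pos_iff, card_cb]
      exact Nat.choose_pos hl
    obtain ⟨⟨γ, hγ⟩⟩ := this
    intro hbot
    have hmem : (Pi.single γ (1:ℂ) : CQ0 m) ∈ Module.End.eigenspace (gmap m) ((m:ℂ) - 2 * l) := by
      rw [mem_eig_gmap_iff]
      intro δ hδ
      exact Pi.single_eq_of_ne (fun h => hδ (by rw [h]; exact hγ)) 1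
    rw [hbot, Submodule.mem_bot] at hmem
    have := congrFun hmem γ
    simp at this

end Aux

/-- STATEMENT 7: for every `n ≥ 2` (written `n = m+1` with `m ≥ 1`), the subspace
`Im D_{n−1} ⊆ ℂ(Q_n ∥ Q_1)` is invariant under the endomorphism `u ↦ [H,u]_Q`; the
eigenvalues of the restriction to `Im D_{n−1}` are exactly the integers
`n−1−2l = m−2l` for `l = 0, 1, …, m = n−1`, and for each such `l` the eigenspace of
the restriction for the eigenvalue `m−2l` has dimension `C(m,l) = C(n−1,l)`. -/



theorem stmt7 (m : ℕ) (hm : 1 ≤ m) :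
    ∃ hInv : ∀ u ∈ LinearMap.range (Dmap m),
        (brL H : CQ1 (m + 1) →ₗ[ℂ] CQ1 (m + 1)) u ∈ LinearMap.range (Dmap m),
      (∀ μ : ℂ, Module.End.HasEigenvalue (HonImD m hInv) μ ↔
        ∃ l : ℕ, l ≤ m ∧ μ = (m : ℂ) - 2 * l) ∧
      (∀ l : ℕ, l ≤ m →
        Module.finrank ℂ (Module.End.eigenspace (HonImD m hInv) ((m : ℂ) - 2 * l))
          = Nat.choose m l) := by
  refine ⟨hInv_holds m, ?_⟩
  obtain ⟨k, rfl⟩ : ∃ k, m = k + 1 := ⟨m - 1, (Nat.succ_pred_eq_of_pos hm).symm⟩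
  set e : CQ0 (k+1) ≃ₗ[ℂ] LinearMap.range (Dmap (k+1)) :=
    LinearEquiv.ofInjective (Dmap (k+1)) Dmap_injective with he
  have hconj : HonImD (k+1) (hInv_holds (k+1)) = e.conj (gmap (k+1)) := by
    apply LinearMap.ext
    intro x
    obtain ⟨c, rfl⟩ := e.surjective x
    apply Subtype.ext
    have hval : ((e c : LinearMap.range (Dmap (k+1))) : CQ1 (k+2)) = Dmap (k+1) c := rfl
    rw [LinearEquiv.conj_apply_apply, e.symm_apply_apply]
    show brL H ((e c : LinearMap.range (Dmap (k+1))) : CQ1 (k+2)) = _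
    rw [hval, comm]
    rfl
  constructor
  · intro μ
    have hmapbot : ∀ p : Submodule ℂ (CQ0 (k+1)),
        p.map (e : CQ0 (k+1) →ₗ[ℂ] LinearMap.range (Dmap (k+1))) = ⊥ ↔ p = ⊥ := by
      intro p
      constructor
      · intro h
        rw [eq_bot_iff]
        intro x hx
        have : e x ∈ p.map (e : CQ0 (k+1) →ₗ[ℂ] LinearMap.range (Dmap (k+1))) :=
          ⟨x, hx, rfl⟩
        rw [h, Submodule.mem_bot] at this
        rw [Submodule.mem_bot]
        have hx0 : e x = 0 := this
        rw [← e.symm_apply_apply x, hx0]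
        exact e.symm.map_zero
      · intro h; rw [h, Submodule.map_bot]
    rw [hconj, Module.End.hasEigenvalue_iff, eigenspace_conj, ← hasEigenvalue_gmap_iff,
      Module.End.hasEigenvalue_iff]
    exact not_congr (hmapbot _)
  · intro l hl
    rw [hconj, eigenspace_conj, LinearEquiv.finrank_map_eq, finrank_eig_gmap]


end TwoLoops
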